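/- (Necessary condition for robustness.) Suppose that for all i ∈ {1,…,m} and all u ∈ ℝⁿ the limit C_i(u) := lim_{t→∞} f_i(t H_i u)/t exists and is finite, but there exist u₀ ∈ ℝⁿ with ‖u₀‖ = 1 and an index set I₀ ⊆ {1,…,m} with |I₀| = p such that Σ_{i∈I₀} C_i(u₀) > Σ_{i∉I₀} C_i(u₀). Then for every z = (z_1,…,z_m) and every r > 0 there exists a (p,m)-sparse attack a supported on I₀ such that, writing y_i = z_i + a_i, every x̂ ∈ ℝⁿ with ‖x̂‖ ≤ r satisfies Σ_{i=1}^m f_i(y_i − H_i(x̂ + u₀)) < Σ_{i=1}^m f_i(y_i − H_i x̂); in particular no minimizer of x̂ ↦ Σ_{i=1}^m f_i(y_i − H_i x̂) has norm at most r. -/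

import Mathlib

open Filter

/-- recession bound: `f (v+w) ≤ f v + c` when `f(t w)/t → c`. -/
lemma recession_bound {k : ℕ} {f : (Fin k → ℝ) → ℝ}
    (hconv : ConvexOn ℝ Set.univ f) {w : Fin k → ℝ} {c : ℝ}
    (htend : Filter.Tendsto (fun t : ℝ => f (t • w) / t) Filter.atTop (nhds c))
    (v : Fin k → ℝ) : f (v + w) ≤ f v + c := by
  set A : ℝ := (1/2) * f ((2:ℝ) • v) - f v with hA
  have key : ∀ t : ℝ, 1 ≤ t →
      f (v + w) ≤ f v + A / t + f ((2*t) • w) / (2*t) := by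
    intro t ht
    have ht0 : (0:ℝ) < t := lt_of_lt_of_le one_pos ht
    have h1 : f (v + w) ≤ (1/t) * f (v + t • w) + (1 - 1/t) * f v := by
      have hcomb : (1/t) • (v + t • w) + (1 - 1/t) • v = v + w := by
        funext j
        simp only [Pi.add_apply, Pi.smul_apply, smul_eq_mul]
        field_simp
        ring
      have h1t : (0:ℝ) ≤ 1/t := by positivity
      have h1t' : (0:ℝ) ≤ 1 - 1/t := by
        have : 1/t ≤ 1 := by rw [div_le_one ht0]; exact ht
        linarith
      have := hconv.2 (Set.mem_univ (v + t • w)) (Set.mem_univ v) h1t h1t'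
        (show (1/t) + (1 - 1/t) = 1 by ring)
      rw [hcomb] at this
      simpa [smul_eq_mul] using this
    have h2 : f (v + t • w) ≤ (1/2) * f ((2:ℝ) • v) + (1/2) * f ((2*t) • w) := by
      have hcomb : (1/2 : ℝ) • ((2:ℝ) • v) + (1/2 : ℝ) • ((2*t) • w) = v + t • w := by
        funext j
        simp only [Pi.add_apply, Pi.smul_apply, smul_eq_mul]
        ring
      have h12 : (0:ℝ) ≤ 1/2 := by norm_num
      have := hconv.2 (Set.mem_univ ((2:ℝ) • v)) (Set.mem_univ ((2*t) • w)) h12 h12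
        (show (1/2 : ℝ) + 1/2 = 1 by norm_num)
      rw [hcomb] at this
      simpa [smul_eq_mul] using this
    have heq : (1/t) * ((1/2) * f ((2:ℝ) • v) + (1/2) * f ((2*t) • w)) + (1 - 1/t) * f v
        = f v + A / t + f ((2*t) • w) / (2*t) := by
      rw [hA]; field_simp; ring
    calc f (v + w) ≤ (1/t) * f (v + t • w) + (1 - 1/t) * f v := h1
      _ ≤ (1/t) * ((1/2) * f ((2:ℝ) • v) + (1/2) * f ((2*t) • w)) + (1 - 1/t) * f v := by
          have h1t : (0:ℝ) ≤ 1/t := by positivity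
          nlinarith [h2]
      _ = f v + A / t + f ((2*t) • w) / (2*t) := heq
  have hlim : Tendsto (fun t : ℝ => f v + A / t + f ((2*t) • w) / (2*t))
      Filter.atTop (nhds (f v + 0 + c)) := by
    refine Filter.Tendsto.add (Filter.Tendsto.add tendsto_const_nhds ?_) ?_
    · exact tendsto_const_nhds.div_atTop tendsto_id
    · exact htend.comp (tendsto_id.const_mul_atTop two_pos)
  have := ge_of_tendsto hlim (Filter.eventually_atTop.2 ⟨1, fun t ht => key t ht⟩)
  linarith


/-- Theorem 2 (necessary condition for robustness): if all the limits
`C i u = lim_{t→∞} f i (t • H i u) / t` exist but there are a unit vector `u₀`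
and an index set `I₀` with `|I₀| = p` such that
`∑_{i∈I₀} C i u₀ > ∑_{i∉I₀} C i u₀`, then for every `z` and every `r > 0`
there is a `(p,m)`-sparse attack supported on `I₀` under which every `x̂` with
`‖x̂‖ ≤ r` is strictly improved by `x̂ + u₀`; in particular no minimizer of the
attacked cost has norm at most `r`. -/
theorem necessary_condition_for_robustness (n m p : ℕ) (hpm : p < m)
    (mi : Fin m → ℕ)
    (H : ∀ i : Fin m, Matrix (Fin (mi i)) (Fin n) ℝ)
    (f : ∀ i : Fin m, (Fin (mi i) → ℝ) → ℝ)
    (hconv : ∀ i, ConvexOn ℝ Set.univ (f i))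
    (hsym : ∀ i u, f i u = f i (-u))
    (hnonneg : ∀ i u, 0 ≤ f i u)
    (hzero : ∀ i, f i 0 = 0)
    (C : Fin m → EuclideanSpace ℝ (Fin n) → ℝ)
    (hC : ∀ (i : Fin m) (u : EuclideanSpace ℝ (Fin n)),
      Filter.Tendsto (fun t : ℝ => f i (t • (H i).mulVec u) / t) Filter.atTop (nhds (C i u)))
    (u₀ : EuclideanSpace ℝ (Fin n)) (hu₀ : ‖u₀‖ = 1)
    (I₀ : Finset (Fin m)) (hI₀ : I₀.card = p)
    (hviol : ∑ i ∈ I₀ᶜ, C i u₀ < ∑ i ∈ I₀, C i u₀) :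
    ∀ (z : ∀ i : Fin m, Fin (mi i) → ℝ) (r : ℝ), 0 < r →
      ∃ a : ∀ i : Fin m, Fin (mi i) → ℝ,
        (∀ i ∉ I₀, a i = 0) ∧
        (∀ xhat : EuclideanSpace ℝ (Fin n), ‖xhat‖ ≤ r →
          ∑ i, f i (z i + a i - (H i).mulVec (xhat + u₀)) <
            ∑ i, f i (z i + a i - (H i).mulVec xhat)) ∧
        (∀ xhat : EuclideanSpace ℝ (Fin n),
          (∀ x : EuclideanSpace ℝ (Fin n),
            ∑ i, f i (z i + a i - (H i).mulVec xhat) ≤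
              ∑ i, f i (z i + a i - (H i).mulVec x)) →
          r < ‖xhat‖) := by
  intro z r hr
  -- basic facts
  have hCnn : ∀ i, 0 ≤ C i u₀ := by
    intro i
    refine ge_of_tendsto (hC i u₀) (Filter.eventually_atTop.2 ⟨1, fun t ht => ?_⟩)
    exact div_nonneg (hnonneg _ _) (by linarith)
  have hp : 0 < p := by
    rcases Nat.eq_zero_or_pos p with hp0 | hp0
    · exfalso
      have hI : I₀ = ∅ := Finset.card_eq_zero.mp (hI₀.trans hp0)
      rw [hI] at hviol
      simp only [Finset.sum_empty] at hviol
      exact absurd hviol (not_lt.2 (Finset.sum_nonneg fun i _ => hCnn i))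
    · exact hp0
  have hI₀ne : I₀.Nonempty := Finset.card_pos.mp (by rw [hI₀]; exact hp)
  set gap : ℝ := ∑ i ∈ I₀, C i u₀ - ∑ i ∈ I₀ᶜ, C i u₀ with hgapdef
  have hgap : 0 < gap := by rw [hgapdef]; linarith
  set δ : ℝ := gap / (2 * p) with hδdef
  have hδ : 0 < δ := by positivity
  -- mulVec is additive on EuclideanSpace
  have hHadd : ∀ (i : Fin m) (x y : EuclideanSpace ℝ (Fin n)),
      (H i).mulVec (x + y) = (H i).mulVec x + (H i).mulVec y := by
    intro i x y
    funext j
    simp [Matrix.mulVec, dotProduct, PiLp.add_apply, mul_add, Finset.sum_add_distrib]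
  -- continuity of f i
  have hfc : ∀ i, Continuous (f i) :=
    fun i => continuousOn_univ.mp ((hconv i).continuousOn isOpen_univ)
  have hmul : ∀ i, Continuous (fun x : EuclideanSpace ℝ (Fin n) => (H i).mulVec x) := by
    intro i
    exact LinearMap.continuous_of_finiteDimensional
      ((Matrix.mulVecLin (H i)).comp (WithLp.linearEquiv 2 ℝ (Fin n → ℝ)).toLinearMap)
  -- bound on the ball
  have hM : ∀ i, ∃ M : ℝ, ∀ x : EuclideanSpace ℝ (Fin n), ‖x‖ ≤ r →
      (1/2) * f i ((2:ℝ) • (H i).mulVec x) + f i ((H i).mulVec x) ≤ M := by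
    intro i
    have hcont : Continuous (fun x : EuclideanSpace ℝ (Fin n) =>
        (1/2) * f i ((2:ℝ) • (H i).mulVec x) + f i ((H i).mulVec x)) := by
      exact (continuous_const.mul ((hfc i).comp ((hmul i).const_smul (2:ℝ)))).add
        ((hfc i).comp (hmul i))
    obtain ⟨x₀, hx₀mem, hx₀⟩ := (isCompact_closedBall (0 : EuclideanSpace ℝ (Fin n)) r).exists_isMaxOn
      ⟨0, Metric.mem_closedBall_self hr.le⟩ hcont.continuousOn
    refine ⟨_, fun x hx => hx₀ (mem_closedBall_zero_iff.2 hx)⟩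
  choose M hMle using hM
  -- the ψ functions and their limits
  have hψ : ∀ i : Fin m, Filter.Tendsto
      (fun T : ℝ => (2 * f i (T • (H i).mulVec u₀) - (1/2) * f i ((2*T) • (H i).mulVec u₀) - M i) / T)
      Filter.atTop (nhds (C i u₀)) := by
    intro i
    have t1 : Filter.Tendsto (fun T : ℝ => 2 * (f i (T • (H i).mulVec u₀) / T))
        Filter.atTop (nhds (2 * C i u₀)) := (hC i u₀).const_mul 2
    have t2 : Filter.Tendsto (fun T : ℝ => f i ((2*T) • (H i).mulVec u₀) / (2*T))
        Filter.atTop (nhds (C i u₀)) :=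
      (hC i u₀).comp (tendsto_id.const_mul_atTop two_pos)
    have t3 : Filter.Tendsto (fun T : ℝ => M i / T) Filter.atTop (nhds 0) :=
      tendsto_const_nhds.div_atTop tendsto_id
    have := (t1.sub t2).sub t3
    rw [show 2 * C i u₀ - C i u₀ - 0 = C i u₀ by ring] at this
    refine this.congr' ?_
    filter_upwards [Filter.eventually_gt_atTop 0] with T hT
    field_simp
  -- choose T
  have hev : ∀ᶠ T : ℝ in Filter.atTop,
      1 ≤ T ∧ ∀ i ∈ I₀, C i u₀ - δ <
        (2 * f i (T • (H i).mulVec u₀) - (1/2) * f i ((2*T) • (H i).mulVec u₀) - M i) / T := by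
    refine (Filter.eventually_ge_atTop 1).and ?_
    rw [Filter.eventually_all_finset]
    intro i _
    exact (hψ i).eventually (eventually_gt_nhds (by linarith))
  obtain ⟨T, hT1, hTψ⟩ := hev.exists
  have hT0 : (0:ℝ) < T := lt_of_lt_of_le one_pos hT1
  -- attack
  set a : ∀ i : Fin m, Fin (mi i) → ℝ :=
    fun i => if i ∈ I₀ then T • (H i).mulVec u₀ - z i else 0 with ha
  have hmain : ∀ xh : EuclideanSpace ℝ (Fin n), ‖xh‖ ≤ r →
      ∑ i, f i (z i + a i - (H i).mulVec (xh + u₀)) <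
        ∑ i, f i (z i + a i - (H i).mulVec xh) := by
    intro xh hxh
    simp only [ha]
    have hterm_out : ∀ i ∈ I₀ᶜ,
        f i (z i + (if i ∈ I₀ then T • (H i).mulVec u₀ - z i else 0) - (H i).mulVec (xh + u₀)) ≤
          f i (z i + (if i ∈ I₀ then T • (H i).mulVec u₀ - z i else 0) - (H i).mulVec xh) + C i u₀ := by
      intro i hi
      rw [Finset.mem_compl] at hi
      rw [if_neg hi, add_zero, hHadd]
      have harg : z i - ((H i).mulVec xh + (H i).mulVec u₀)
          = (z i - (H i).mulVec xh) + (-(H i).mulVec u₀) := by abel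
      rw [harg]
      refine recession_bound (hconv i) ?_ _
      refine (hC i u₀).congr fun t => ?_
      rw [hsym i (t • (H i).mulVec u₀), smul_neg]
    have hterm_in : ∀ i ∈ I₀,
        f i (z i + (if i ∈ I₀ then T • (H i).mulVec u₀ - z i else 0) - (H i).mulVec (xh + u₀)) <
          f i (z i + (if i ∈ I₀ then T • (H i).mulVec u₀ - z i else 0) - (H i).mulVec xh) - (C i u₀ - δ) := by
      intro i hi
      rw [if_pos hi, add_sub_cancel, hHadd]
      set b : Fin (mi i) → ℝ := T • (H i).mulVec u₀ - (H i).mulVec xh with hb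
      set v : Fin (mi i) → ℝ := (H i).mulVec xh with hv
      have harg : T • (H i).mulVec u₀ - ((H i).mulVec xh + (H i).mulVec u₀)
          = b - (H i).mulVec u₀ := by rw [hb]; abel
      rw [harg]
      -- h3 : slope inequality
      have h3 : f i (b - (H i).mulVec u₀) ≤ (1/T) * f i v + (1 - 1/T) * f i b := by
        have hcomb : (1/T) • (-v) + (1 - 1/T) • b = b - (H i).mulVec u₀ := by
          rw [hb, hv]
          funext j
          simp only [Pi.add_apply, Pi.sub_apply, Pi.smul_apply, Pi.neg_apply, smul_eq_mul]
          field_simp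
          ring
        have h1t : (0:ℝ) ≤ 1/T := by positivity
        have h1t' : (0:ℝ) ≤ 1 - 1/T := by
          have : 1/T ≤ 1 := by rw [div_le_one hT0]; exact hT1
          linarith
        have := (hconv i).2 (Set.mem_univ (-v)) (Set.mem_univ b) h1t h1t'
          (show (1/T) + (1 - 1/T) = 1 by ring)
        rw [hcomb] at this
        rw [← hsym i v] at this
        simpa [smul_eq_mul] using this
      -- h4, h5 : lower bound for f i b
      have h4 : f i (T • (H i).mulVec u₀) ≤ (1/2) * f i b + (1/2) * f i (T • (H i).mulVec u₀ + v) := by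
        have hcomb : (1/2 : ℝ) • b + (1/2 : ℝ) • (T • (H i).mulVec u₀ + v) = T • (H i).mulVec u₀ := by
          rw [hb, hv]
          funext j
          simp only [Pi.add_apply, Pi.sub_apply, Pi.smul_apply, smul_eq_mul]
          ring
        have h12 : (0:ℝ) ≤ 1/2 := by norm_num
        have := (hconv i).2 (Set.mem_univ b) (Set.mem_univ (T • (H i).mulVec u₀ + v)) h12 h12
          (show (1/2 : ℝ) + 1/2 = 1 by norm_num)
        rw [hcomb] at this
        simpa [smul_eq_mul] using this
      have h5 : f i (T • (H i).mulVec u₀ + v) ≤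
          (1/2) * f i ((2*T) • (H i).mulVec u₀) + (1/2) * f i ((2:ℝ) • v) := by
        have hcomb : (1/2 : ℝ) • ((2*T) • (H i).mulVec u₀) + (1/2 : ℝ) • ((2:ℝ) • v)
            = T • (H i).mulVec u₀ + v := by
          funext j
          simp only [Pi.add_apply, Pi.smul_apply, smul_eq_mul]
          ring
        have h12 : (0:ℝ) ≤ 1/2 := by norm_num
        have := (hconv i).2 (Set.mem_univ ((2*T) • (H i).mulVec u₀)) (Set.mem_univ ((2:ℝ) • v)) h12 h12
          (show (1/2 : ℝ) + 1/2 = 1 by norm_num)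
        rw [hcomb] at this
        simpa [smul_eq_mul] using this
      -- combine
      have hMb : (1/2) * f i ((2:ℝ) • v) + f i v ≤ M i := hMle i xh hxh
      have hψT := hTψ i hi
      have hfb : 2 * f i (T • (H i).mulVec u₀) - (1/2) * f i ((2*T) • (H i).mulVec u₀)
          - (1/2) * f i ((2:ℝ) • v) ≤ f i b := by linarith
      have hnum : 2 * f i (T • (H i).mulVec u₀) - (1/2) * f i ((2*T) • (H i).mulVec u₀) - M i
          ≤ f i b - f i v := by linarith
      have hdiv : (2 * f i (T • (H i).mulVec u₀) - (1/2) * f i ((2*T) • (H i).mulVec u₀) - M i) / T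
          ≤ (f i b - f i v) / T := by gcongr
      have hslope : (f i b - f i v) / T ≤ f i b - f i (b - (H i).mulVec u₀) := by
        rw [div_le_iff₀ hT0]
        have h3' := mul_le_mul_of_nonneg_right h3 hT0.le
        have hexp : (1/T * f i v + (1 - 1/T) * f i b) * T = f i v + f i b * T - f i b := by
          field_simp
          ring
        rw [hexp] at h3'
        nlinarith [h3']
      linarith
    -- sum up
    have hsum_out := Finset.sum_le_sum hterm_out
    have hsum_in := Finset.sum_lt_sum_of_nonempty hI₀ne hterm_in
    rw [Finset.sum_add_distrib] at hsum_out
    rw [Finset.sum_sub_distrib, Finset.sum_sub_distrib] at hsum_in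
    have hδsum : ∑ _i ∈ I₀, δ = p * δ := by
      rw [Finset.sum_const, hI₀, nsmul_eq_mul]
    have hpδ : (p:ℝ) * δ = gap / 2 := by
      rw [hδdef]
      field_simp
    rw [← Finset.sum_add_sum_compl I₀
      (fun i => f i (z i + (if i ∈ I₀ then T • (H i).mulVec u₀ - z i else 0) - (H i).mulVec (xh + u₀)))]
    rw [← Finset.sum_add_sum_compl I₀
      (fun i => f i (z i + (if i ∈ I₀ then T • (H i).mulVec u₀ - z i else 0) - (H i).mulVec xh))]
    rw [hδsum, hpδ] at hsum_in
    linarith [hsum_out, hsum_in, hviol, hgapdef]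
  refine ⟨a, fun i hi => by simp [ha, hi], hmain, ?_⟩
  intro xh hmin
  by_contra hcon
  push_neg at hcon
  exact absurd (hmin (xh + u₀)) (not_le.2 (hmain xh hcon))
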